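/- Noiseless randomized Kaczmarz convergence: Let A be an m × n real matrix with full column rank and nonzero rows, Ax = b, and define iterates x_{k} = x_{k-1} + ((b_{i_k} − ⟨a_{i_k}, x_{k-1}⟩)/‖a_{i_k}‖²) a_{i_k} with i_k i.i.d., ℙ(i_k = i) = ‖a_i‖²/‖A‖_F². Then 𝔼‖x_k − x‖² ≤ (1 − 1/R)^k ‖x₀ − x‖², where R = ‖A⁻¹‖²‖A‖_F². -/

import Mathlib

open Finset

/-- Euclidean norm on `Fin k → ℝ`. -/
noncomputable def enorm {k : ℕ} (v : Fin k → ℝ) : ℝ := Real.sqrt (∑ j, v j ^ 2)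

/-- Standard inner product on `Fin k → ℝ`. -/
noncomputable def ip {k : ℕ} (v w : Fin k → ℝ) : ℝ := ∑ j, v j * w j

/-- Frobenius norm of a matrix. -/
noncomputable def frob {m n : ℕ} (A : Matrix (Fin m) (Fin n) ℝ) : ℝ :=
  Real.sqrt (∑ i, ∑ j, A i j ^ 2)

/-- `‖A⁻¹‖ = inf {M : M‖Az‖ ≥ ‖z‖ for all z}`. -/
noncomputable def invNorm {m n : ℕ} (A : Matrix (Fin m) (Fin n) ℝ) : ℝ :=
  sInf {M : ℝ | ∀ z : Fin n → ℝ, _root_.enorm z ≤ M * _root_.enorm (A.mulVec z)}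

/-- Kaczmarz iteration driven by a list of row indices (head = last step):
each step orthogonally projects onto the hyperplane `{z : ⟨a_i, z⟩ = c i}`. -/
noncomputable def kIter {m n : ℕ} (A : Matrix (Fin m) (Fin n) ℝ) (c : Fin m → ℝ)
    (x0 : Fin n → ℝ) : List (Fin m) → (Fin n → ℝ)
  | [] => x0
  | i :: l => kIter A c x0 l + ((c i - ip (A i) (kIter A c x0 l)) / _root_.enorm (A i) ^ 2) • A i

/-! ### Auxiliary lemmas -/

/-- Squared Euclidean norm. -/
noncomputable def ns {k : ℕ} (v : Fin k → ℝ) : ℝ := ∑ j, v j ^ 2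

lemma ns_nonneg {k : ℕ} (v : Fin k → ℝ) : 0 ≤ ns v :=
  Finset.sum_nonneg fun _ _ => sq_nonneg _

lemma enorm_sq' {k : ℕ} (v : Fin k → ℝ) : _root_.enorm v ^ 2 = ns v :=
  Real.sq_sqrt (ns_nonneg v)

lemma enorm_nonneg' {k : ℕ} (v : Fin k → ℝ) : 0 ≤ _root_.enorm v := Real.sqrt_nonneg _

lemma ns_eq_zero {k : ℕ} {v : Fin k → ℝ} (h : ns v = 0) : v = 0 := by
  funext j
  have := (Finset.sum_eq_zero_iff_of_nonneg (fun j _ => sq_nonneg (v j))).mp h j (Finset.mem_univ j)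
  exact pow_eq_zero_iff two_ne_zero |>.mp this

lemma enorm_zero_imp {k : ℕ} {v : Fin k → ℝ} (h : _root_.enorm v = 0) : v = 0 := by
  apply ns_eq_zero
  rw [← enorm_sq', h]; ring

lemma ns_pos {k : ℕ} {v : Fin k → ℝ} (h : v ≠ 0) : 0 < ns v := by
  rcases lt_or_eq_of_le (ns_nonneg v) with h1 | h1
  · exact h1
  · exact absurd (ns_eq_zero h1.symm) h

lemma frob_sq {m n : ℕ} (A : Matrix (Fin m) (Fin n) ℝ) : frob A ^ 2 = ∑ i, ns (A i) :=
  Real.sq_sqrt (Finset.sum_nonneg fun _ _ => Finset.sum_nonneg fun _ _ => sq_nonneg _)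

lemma mulVec_ip {m n : ℕ} (A : Matrix (Fin m) (Fin n) ℝ) (v : Fin n → ℝ) (i : Fin m) :
    A.mulVec v i = ip (A i) v := by
  simp [Matrix.mulVec, dotProduct, ip]

lemma ns_mulVec {m n : ℕ} (A : Matrix (Fin m) (Fin n) ℝ) (v : Fin n → ℝ) :
    ns (A.mulVec v) = ∑ i, ip (A i) v ^ 2 := by
  unfold ns; exact Finset.sum_congr rfl fun i _ => by rw [mulVec_ip]

lemma ip_sub {k : ℕ} (w u v : Fin k → ℝ) : ip w u - ip w v = ip w (u - v) := by
  simp [ip, mul_sub, Finset.sum_sub_distrib]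

lemma ns_add_smul {k : ℕ} (v w : Fin k → ℝ) (s : ℝ) :
    ns (v + s • w) = ns v + 2 * s * ip w v + s ^ 2 * ns w := by
  have h : ∀ j, (v j + s * w j) ^ 2 = v j ^ 2 + 2 * s * (w j * v j) + s ^ 2 * w j ^ 2 :=
    fun j => by ring
  unfold ns ip
  simp only [Pi.add_apply, Pi.smul_apply, smul_eq_mul]
  rw [Finset.sum_congr rfl fun j _ => h j, Finset.sum_add_distrib, Finset.sum_add_distrib,
    ← Finset.mul_sum, ← Finset.mul_sum]

lemma enorm_single {k : ℕ} (i : Fin k) : _root_.enorm (Pi.single i 1) = 1 := by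
  unfold _root_.enorm
  have h : (∑ j, (Pi.single i 1 : Fin k → ℝ) j ^ 2) = 1 := by
    simp [Pi.single_apply, sq]
  rw [h, Real.sqrt_one]

lemma enorm_eq_norm {k : ℕ} (v : EuclideanSpace ℝ (Fin k)) : ‖v‖ = _root_.enorm (fun j => v j) := by
  rw [EuclideanSpace.norm_eq]; unfold _root_.enorm
  congr 1; exact Finset.sum_congr rfl fun j _ => by rw [Real.norm_eq_abs, sq_abs]

lemma invNorm_spec {m n : ℕ} (A : Matrix (Fin m) (Fin n) ℝ) (hrank : A.rank = n) (hn : 0 < n) :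
    (∀ z, _root_.enorm z ≤ invNorm A * _root_.enorm (A.mulVec z)) ∧ 0 < invNorm A := by
  have hker : LinearMap.ker A.mulVecLin = ⊥ := by
    have h1 := LinearMap.finrank_range_add_finrank_ker A.mulVecLin
    have h2 : Module.finrank ℝ (LinearMap.range A.mulVecLin) = n := hrank
    rw [h2, Module.finrank_fintype_fun_eq_card, Fintype.card_fin] at h1
    have h3 : Module.finrank ℝ (LinearMap.ker A.mulVecLin) = 0 := by omega
    exact Submodule.finrank_eq_zero.mp h3
  have hinj : Function.Injective A.mulVec := by
    intro u v huv
    have := LinearMap.ker_eq_bot.mp hker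
    exact this huv
  let L : EuclideanSpace ℝ (Fin n) →ₗ[ℝ] EuclideanSpace ℝ (Fin m) :=
    { toFun := fun z => WithLp.toLp 2 (A.mulVec (WithLp.ofLp z)),
      map_add' := fun u v => by simp [Matrix.mulVec_add],
      map_smul' := fun c v => by simp [Matrix.mulVec_smul] }
  have hkerL : LinearMap.ker L = ⊥ := LinearMap.ker_eq_bot.mpr (fun u v huv => WithLp.ofLp_injective 2 (hinj (WithLp.toLp_injective 2 huv)))
  obtain ⟨K, hK0, hKa⟩ := L.exists_antilipschitzWith hkerL
  set S := {M : ℝ | ∀ z : Fin n → ℝ, _root_.enorm z ≤ M * _root_.enorm (A.mulVec z)} with hS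
  have hKS : (K : ℝ) ∈ S := by
    intro z
    have h := hKa.le_mul_dist ((WithLp.equiv 2 (Fin n → ℝ)).symm z) 0
    rw [map_zero, dist_zero_right, dist_zero_right, enorm_eq_norm, enorm_eq_norm] at h
    exact h
  have hSne : S.Nonempty := ⟨K, hKS⟩
  have hSpos : ∀ M ∈ S, 0 < M := by
    intro M hM
    have h1 := hM (Pi.single ⟨0, hn⟩ 1)
    rw [enorm_single] at h1
    nlinarith [enorm_nonneg' (A.mulVec (Pi.single ⟨0, hn⟩ 1))]
  have hInf0 : 0 ≤ invNorm A := le_csInf hSne fun M hM => (hSpos M hM).le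
  have hinv : ∀ z, _root_.enorm z ≤ invNorm A * _root_.enorm (A.mulVec z) := by
    intro z
    by_cases hz : z = 0
    · subst hz
      have : _root_.enorm (0 : Fin n → ℝ) = 0 := by unfold _root_.enorm; simp
      rw [this]
      exact mul_nonneg hInf0 (enorm_nonneg' _)
    · have hc : 0 < _root_.enorm (A.mulVec z) := by
        rcases lt_or_eq_of_le (enorm_nonneg' (A.mulVec z)) with h | h
        · exact h
        · exfalso
          have h0 : A.mulVec z = 0 := enorm_zero_imp h.symm
          have : A.mulVec z = A.mulVec 0 := by rw [h0, Matrix.mulVec_zero]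
          exact hz (hinj this)
      have hge : _root_.enorm z / _root_.enorm (A.mulVec z) ≤ invNorm A :=
        le_csInf hSne fun M hM => (div_le_iff₀ hc).mpr (hM z)
      exact (div_le_iff₀ hc).mp hge
  refine ⟨hinv, ?_⟩
  have h1 := hinv (Pi.single ⟨0, hn⟩ 1)
  rw [enorm_single] at h1
  nlinarith [enorm_nonneg' (A.mulVec (Pi.single ⟨0, hn⟩ 1)), hInf0]

lemma step_bound {m n : ℕ} (A : Matrix (Fin m) (Fin n) ℝ)
    (hrows : ∀ i, A i ≠ 0) (x : Fin n → ℝ) (b : Fin m → ℝ)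
    (hb : ∀ i, ip (A i) x = b i)
    (hinv : ∀ z, _root_.enorm z ≤ invNorm A * _root_.enorm (A.mulVec z))
    (hIpos : 0 < invNorm A) (hFpos : 0 < frob A ^ 2) (z : Fin n → ℝ) :
    ∑ i, (ns (A i) / frob A ^ 2) *
        ns (z + ((b i - ip (A i) z) / _root_.enorm (A i) ^ 2) • A i - x)
      ≤ (1 - 1 / (invNorm A ^ 2 * frob A ^ 2)) * ns (z - x) := by
  set F := frob A ^ 2 with hFdef
  set I := invNorm A with hIdef
  set e := z - x with he
  have hterm : ∀ i : Fin m,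
      (ns (A i) / F) * ns (z + ((b i - ip (A i) z) / _root_.enorm (A i) ^ 2) • A i - x)
        = ns (A i) * ns e / F - ip (A i) e ^ 2 / F := by
    intro i
    have hna : 0 < ns (A i) := ns_pos (hrows i)
    have hv : z + ((b i - ip (A i) z) / _root_.enorm (A i) ^ 2) • A i - x
        = e + ((-(ip (A i) e)) / ns (A i)) • A i := by
      rw [enorm_sq']
      have hbi : b i - ip (A i) z = -(ip (A i) e) := by
        rw [← hb i, he, ← ip_sub]; ring
      rw [hbi, he]
      funext j
      simp only [Pi.add_apply, Pi.sub_apply, Pi.smul_apply, smul_eq_mul]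
      ring
    rw [hv, ns_add_smul]
    field_simp
    ring
  rw [Finset.sum_congr rfl fun i _ => hterm i]
  have hsum : ∑ i, (ns (A i) * ns e / F - ip (A i) e ^ 2 / F)
      = (∑ i, ns (A i)) * ns e / F - (∑ i, ip (A i) e ^ 2) / F := by
    rw [Finset.sum_sub_distrib, ← Finset.sum_div, ← Finset.sum_div, ← Finset.sum_mul]
  rw [hsum, ← frob_sq, ← ns_mulVec, ← hFdef]
  have hFne : F ≠ 0 := ne_of_gt hFpos
  rw [show F * ns e / F = ns e by field_simp]
  have h1 : ns e ≤ I ^ 2 * ns (A.mulVec e) := by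
    have h := hinv e
    have h2 := pow_le_pow_left₀ (enorm_nonneg' e) h 2
    rw [mul_pow, enorm_sq', enorm_sq'] at h2
    exact h2
  have hI2 : 0 < I ^ 2 := pow_pos hIpos 2
  have key : ns e / (I ^ 2 * F) ≤ ns (A.mulVec e) / F := by
    rw [div_le_div_iff₀ (by positivity) hFpos]
    nlinarith [mul_le_mul_of_nonneg_right h1 hFpos.le]
  have expand : (1 - 1 / (I ^ 2 * F)) * ns e = ns e - ns e / (I ^ 2 * F) := by ring
  linarith

/-- Noiseless randomized Kaczmarz: expected exponential convergence. -/
theorem stmt_16 (m n : ℕ) (A : Matrix (Fin m) (Fin n) ℝ) (hrank : A.rank = n)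
    (hrows : ∀ i, A i ≠ 0) (x x0 : Fin n → ℝ) (b : Fin m → ℝ)
    (hb : ∀ i, ip (A i) x = b i) (k : ℕ) :
    ∑ f : Fin k → Fin m, (∏ j, _root_.enorm (A (f j)) ^ 2 / frob A ^ 2) *
        _root_.enorm (kIter A b x0 (List.ofFn f) - x) ^ 2 ≤
      (1 - 1 / (invNorm A ^ 2 * frob A ^ 2)) ^ k * _root_.enorm (x0 - x) ^ 2 := by
  rcases Nat.eq_zero_or_pos n with hn | hn
  · subst hn
    have hz : ∀ v : Fin 0 → ℝ, _root_.enorm v = 0 := by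
      intro v; unfold _root_.enorm; simp
    simp [hz]
  -- main case
  have hm : 0 < m := by
    have h := A.rank_le_card_height
    rw [hrank, Fintype.card_fin] at h
    omega
  have hFpos : 0 < frob A ^ 2 := by
    rw [frob_sq]
    exact Finset.sum_pos' (fun i _ => ns_nonneg _)
      ⟨⟨0, hm⟩, Finset.mem_univ _, ns_pos (hrows _)⟩
  obtain ⟨hinv, hIpos⟩ := invNorm_spec A hrank hn
  set I := invNorm A with hIdef
  set F := frob A ^ 2 with hFdef
  set q := 1 - 1 / (I ^ 2 * F) with hqdef
  -- q is nonnegative: 1 ≤ I^2 * F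
  have hR1 : 1 ≤ I ^ 2 * F := by
    set z0 : Fin n → ℝ := Pi.single ⟨0, hn⟩ 1 with hz0
    have hz1 : ns z0 = 1 := by rw [← enorm_sq', enorm_single]; norm_num
    have hCS : ns (A.mulVec z0) ≤ F * ns z0 := by
      rw [ns_mulVec, hFdef, frob_sq]
      calc ∑ i, ip (A i) z0 ^ 2 ≤ ∑ i, ns (A i) * ns z0 :=
            Finset.sum_le_sum fun i _ => by
              have h := Finset.sum_mul_sq_le_sq_mul_sq Finset.univ (A i) z0
              simpa [ip, ns] using h
        _ = (∑ i, ns (A i)) * ns z0 := (Finset.sum_mul _ _ _).symm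
    have h1 : ns z0 ≤ I ^ 2 * ns (A.mulVec z0) := by
      have h := hinv z0
      have h2 := pow_le_pow_left₀ (enorm_nonneg' z0) h 2
      rw [mul_pow, enorm_sq', enorm_sq'] at h2
      exact h2
    nlinarith [pow_pos hIpos 2]
  have hq0 : 0 ≤ q := by
    have hIF : 0 < I ^ 2 * F := by positivity
    have : 1 / (I ^ 2 * F) ≤ 1 := by rw [div_le_one hIF]; exact hR1
    rw [hqdef]; linarith
  -- restate with ns
  simp only [enorm_sq']
  induction k with
  | zero =>
    simp [kIter, Finset.sum_const, Finset.card_univ]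
  | succ k ih =>
    rw [← Equiv.sum_comp (Fin.consEquiv fun _ => Fin m)
      (fun f => (∏ j, ns (A (f j)) / F) * ns (kIter A b x0 (List.ofFn f) - x))]
    rw [Fintype.sum_prod_type]
    have hce : ∀ (p : Fin m × (Fin k → Fin m)),
        (Fin.consEquiv fun _ => Fin m) p = (Fin.cons p.1 p.2 : Fin (k+1) → Fin m) := fun p => rfl
    have hofn : ∀ (i : Fin m) (g : Fin k → Fin m),
        List.ofFn (Fin.cons i g : Fin (k+1) → Fin m) = i :: List.ofFn g := by
      intro i g
      rw [List.ofFn_succ]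
      simp [Fin.cons_zero, Fin.cons_succ]
    have hprod : ∀ (i : Fin m) (g : Fin k → Fin m),
        (∏ j : Fin (k + 1), ns (A ((Fin.cons i g : Fin (k+1) → Fin m) j)) / F)
          = (ns (A i) / F) * ∏ j : Fin k, ns (A (g j)) / F := by
      intro i g
      rw [Fin.prod_univ_succ]
      simp [Fin.cons_zero, Fin.cons_succ]
    simp only [hce, hofn, hprod, kIter]
    rw [Finset.sum_comm]
    have hQ : ∀ g : Fin k → Fin m, 0 ≤ ∏ j : Fin k, ns (A (g j)) / F :=
      fun g => Finset.prod_nonneg fun j _ => div_nonneg (ns_nonneg _) hFpos.le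
    calc ∑ g : Fin k → Fin m, ∑ i : Fin m,
          (ns (A i) / F * ∏ j : Fin k, ns (A (g j)) / F) *
            ns (kIter A b x0 (List.ofFn g) +
              ((b i - ip (A i) (kIter A b x0 (List.ofFn g))) / _root_.enorm (A i) ^ 2) • A i - x)
        ≤ ∑ g : Fin k → Fin m, (∏ j : Fin k, ns (A (g j)) / F) *
            (q * ns (kIter A b x0 (List.ofFn g) - x)) := by
          apply Finset.sum_le_sum
          intro g _
          have hstep := step_bound A hrows x b hb hinv hIpos hFpos (kIter A b x0 (List.ofFn g))
          rw [← hFdef, ← hIdef, ← hqdef] at hstep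
          calc ∑ i : Fin m,
                (ns (A i) / F * ∏ j : Fin k, ns (A (g j)) / F) *
                  ns (kIter A b x0 (List.ofFn g) +
                    ((b i - ip (A i) (kIter A b x0 (List.ofFn g))) / _root_.enorm (A i) ^ 2) • A i - x)
              = (∏ j : Fin k, ns (A (g j)) / F) * ∑ i : Fin m,
                  (ns (A i) / F) *
                  ns (kIter A b x0 (List.ofFn g) +
                    ((b i - ip (A i) (kIter A b x0 (List.ofFn g))) / _root_.enorm (A i) ^ 2) • A i - x) := by
                rw [Finset.mul_sum]
                exact Finset.sum_congr rfl fun i _ => by ring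
            _ ≤ (∏ j : Fin k, ns (A (g j)) / F) *
                  (q * ns (kIter A b x0 (List.ofFn g) - x)) :=
                mul_le_mul_of_nonneg_left hstep (hQ g)
      _ = q * ∑ g : Fin k → Fin m, (∏ j : Fin k, ns (A (g j)) / F) *
            ns (kIter A b x0 (List.ofFn g) - x) := by
          rw [Finset.mul_sum]
          exact Finset.sum_congr rfl fun g _ => by ring
      _ ≤ q * (q ^ k * ns (x0 - x)) := mul_le_mul_of_nonneg_left ih hq0
      _ = q ^ (k + 1) * ns (x0 - x) := by rw [pow_succ]; ring
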